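/- Let F be a family of edge sets of a network N regimented by R = (Q, I), and suppose there is no F-rainbow s–t path. Then a member F ∈ F is essential (lies in the domain of I) if and only if F contains the edge set of some s–t path; moreover, for essential F, the path I(F) is the unique s–t path whose edges are contained in F. -/

import Mathlib

/-- A directed `s`–`t` path, recorded as its list of (distinct) vertices,
starting at `s` and ending at `t`. -/
def IsStPath {V : Type*} (s t : V) (p : List V) : Prop :=
  p.Nodup ∧ p.head? = some s ∧ p.getLast? = some t

/-- The (directed) edges of a path given by its vertex list. -/
def pathEdges {V : Type*} (p : List V) : List (V × V) := p.zip p.tail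

/-- The inner vertices of a path: all vertices except the first and last. -/
def innerVerts {V : Type*} (p : List V) : List V := p.tail.dropLast

/-- The family `F` of edge sets has a rainbow `s`–`t` path: an `s`–`t` path
whose edges are injectively represented by distinct members of `F`. -/
def HasRainbowStPath {V ι : Type*} (s t : V) (F : ι → Set (V × V)) : Prop :=
  ∃ p : List V, IsStPath s t p ∧
    ∃ g : Fin (pathEdges p).length → ι, Function.Injective g ∧
      ∀ j, (pathEdges p).get j ∈ F (g j)

/-- A regimentation of a family `F` of edge sets of the network `(V, s, t)`:
a set `paths` of internally disjoint `s`–`t` paths covering all vertices,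
together with a map `I` from the essential subfamily `ess` onto `paths`, such
that the edges of `I i` all belong to `F i`, and each path `p` has exactly
`|E(p)| - 1` essential sets assigned to it. -/
structure Regimentation {V ι : Type*} (s t : V) (F : ι → Set (V × V)) where
  paths : Set (List V)
  isPath : ∀ p ∈ paths, IsStPath s t p
  intDisj : ∀ p ∈ paths, ∀ q ∈ paths, p ≠ q →
    ∀ v ∈ innerVerts p, v ∉ innerVerts q
  cover : ∀ v : V, ∃ p ∈ paths, v ∈ p
  ess : Set ι
  I : ι → List V
  I_mem : ∀ i ∈ ess, I i ∈ paths
  I_surj : ∀ p ∈ paths, ∃ i ∈ ess, I i = p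
  I_rep : ∀ i ∈ ess, ∀ e ∈ pathEdges (I i), e ∈ F i
  I_count : ∀ p ∈ paths, {i | i ∈ ess ∧ I i = p}.ncard = (pathEdges p).length - 1

namespace StAux
open List
variable {V ι : Type*}

lemma length_pathEdges (l : List V) : (pathEdges l).length = l.length - 1 := by
  simp [pathEdges]

lemma getElem_pathEdges (l : List V) (j : ℕ) (h : j < (pathEdges l).length) :
    (pathEdges l)[j] = (l[j]'(by simp [length_pathEdges] at h; omega),
      l[j+1]'(by simp [length_pathEdges] at h; omega)) := by
  simp only [pathEdges, List.getElem_zip, List.getElem_tail]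

lemma mem_pathEdges (l : List V) (j : ℕ) (h : j + 1 < l.length) :
    (l[j]'(by omega), l[j+1]) ∈ pathEdges l := by
  have h' : j < (pathEdges l).length := by rw [length_pathEdges]; omega
  have := getElem_pathEdges l j h'
  rw [← this]; exact List.getElem_mem h'

lemma pathEdges_cons_cons (a b : V) (l : List V) :
    pathEdges (a :: b :: l) = (a, b) :: pathEdges (b :: l) := rfl

lemma pathEdges_append (A B : List V) (hA : A ≠ []) (hB : B ≠ []) :
    pathEdges (A ++ B) = pathEdges A ++ (A.getLast hA, B.head hB) :: pathEdges B := by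
  induction A with
  | nil => exact absurd rfl hA
  | cons a A' ih =>
    cases A' with
    | nil =>
      cases B with
      | nil => exact absurd rfl hB
      | cons b B' => simp [pathEdges_cons_cons, pathEdges]
    | cons a2 A'' =>
      have h2 : (a2 :: A'') ≠ [] := by simp
      have h1 : (a :: a2 :: A'') ++ B = a :: a2 :: (A'' ++ B) := by simp
      rw [h1]
      have h3 : a2 :: (A'' ++ B) = (a2 :: A'') ++ B := by simp
      rw [pathEdges_cons_cons, h3, ih h2]
      simp [pathEdges_cons_cons, List.getLast_cons h2]

lemma pathEdges_take_sublist (l : List V) (k : ℕ) :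
    pathEdges (l.take k) <+ pathEdges l := by
  rcases eq_or_ne (l.take k) [] with h | h
  · simp [h, pathEdges]
  rcases eq_or_ne (l.drop k) [] with h2 | h2
  · have h3 : l.take k = l := by
      have h4 := List.take_append_drop k l; rw [h2] at h4; simpa using h4
    rw [h3]
  · conv_rhs => rw [← List.take_append_drop k l, pathEdges_append _ _ h h2]
    exact List.sublist_append_left _ _

lemma pathEdges_drop_sublist (l : List V) (k : ℕ) :
    pathEdges (l.drop k) <+ pathEdges l := by
  rcases eq_or_ne (l.drop k) [] with h | h
  · simp [h, pathEdges]
  rcases eq_or_ne (l.take k) [] with h2 | h2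
  · have h3 : l.drop k = l := by
      have h4 := List.take_append_drop k l; rw [h2] at h4; simpa using h4
    rw [h3]
  · conv_rhs => rw [← List.take_append_drop k l, pathEdges_append _ _ h2 h]
    exact ((List.sublist_cons_self _ _).trans (List.sublist_append_right _ _))

lemma pathEdges_reverse (l : List V) :
    pathEdges l.reverse = ((pathEdges l).map Prod.swap).reverse := by
  induction l with
  | nil => rfl
  | cons a l ih =>
    cases l with
    | nil => rfl
    | cons b l' =>
      have hrev : (a :: b :: l').reverse = (b :: l').reverse ++ [a] := by simp
      have hne : (b :: l').reverse ≠ [] := by simp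
      rw [hrev, pathEdges_append _ _ hne (by simp), ih]
      have hhd : ([a] : List V).head (by simp) = a := rfl
      rw [hhd]
      have hgl : ((b :: l').reverse).getLast hne = b := by
        rw [List.getLast_reverse]; rfl
      rw [hgl]
      simp [pathEdges_cons_cons, pathEdges]

lemma innerVerts_getElem (q : List V) (j : ℕ) (h1 : 1 ≤ j) (h2 : j + 1 < q.length) :
    q[j] ∈ innerVerts q := by
  have hl : q.tail.dropLast.length = q.length - 2 := by simp; omega
  have hj : j - 1 < q.tail.dropLast.length := by omega
  have heq : q.tail.dropLast[j-1] = q[j] := by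
    rw [List.getElem_dropLast, List.getElem_tail]
    congr 1; omega
  rw [← heq]
  exact List.getElem_mem hj

lemma mem_innerVerts_iff (q : List V) (v : V) :
    v ∈ innerVerts q ↔ ∃ j, 1 ≤ j ∧ j + 1 < q.length ∧ ∃ h : j < q.length, q[j] = v := by
  constructor
  · intro hv
    rw [innerVerts, List.mem_iff_getElem] at hv
    obtain ⟨n, hn, hval⟩ := hv
    have hl : q.tail.dropLast.length = q.length - 2 := by simp; omega
    refine ⟨n + 1, by omega, by omega, by omega, ?_⟩
    rw [← hval, List.getElem_dropLast, List.getElem_tail]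
  · rintro ⟨j, h1, h2, h3, rfl⟩
    exact innerVerts_getElem q j h1 h2

lemma rainbow_of_forall₂ {s t : V} {F : ι → Set (V × V)} (p : List V)
    (hp : IsStPath s t p) (L : List ι) (hnd : L.Nodup)
    (hf : List.Forall₂ (fun e c => e ∈ F c) (pathEdges p) L) :
    HasRainbowStPath s t F := by
  rw [List.forall₂_iff_get] at hf
  obtain ⟨hlen, hget⟩ := hf
  refine ⟨p, hp, fun j => L.get (Fin.cast hlen j), ?_, ?_⟩
  · intro a b hab
    have := (List.nodup_iff_injective_get.mp hnd) hab
    exact Fin.cast_injective _ (by exact this)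
  · intro j
    exact hget j.1 j.2 (by omega)

lemma forall₂_of_pool {E : List (V × V)} {L : List ι} {F : ι → Set (V × V)}
    (hlen : L.length = E.length) (h : ∀ c ∈ L, ∀ e ∈ E, e ∈ F c) :
    List.Forall₂ (fun e c => e ∈ F c) E L := by
  rw [List.forall₂_iff_get]
  exact ⟨hlen.symm, fun i h1 h2 => h _ (L.get_mem _) _ (E.get_mem _)⟩

lemma exists_pool_list (S : Set ι) (n k : ℕ) (hS : S.ncard = n) (hk : k ≤ n) :
    ∃ L : List ι, L.Nodup ∧ L.length = k ∧ ∀ c ∈ L, c ∈ S := by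
  rcases Nat.eq_zero_or_pos k with rfl | hkpos
  · exact ⟨[], by simp, by simp, by simp⟩
  · have hfin : S.Finite := by
      by_contra hinf
      rw [Set.Infinite.ncard (by simpa using hinf)] at hS; omega
    have hcard : hfin.toFinset.card = n := by
      rw [← hS, Set.ncard_eq_toFinset_card S hfin]
    obtain ⟨T, hT, hTcard⟩ := Finset.exists_subset_card_eq (s := hfin.toFinset) (n := k) (by omega)
    exact ⟨T.toList, T.nodup_toList, by simp [hTcard], fun c hc => by
      have := hT (Finset.mem_toList.mp hc); rwa [Set.Finite.mem_toFinset] at this⟩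

lemma glue_rainbow {s t : V} {F : ι → Set (V × V)} (A B : List V)
    (hA : A ≠ []) (hB : B ≠ [])
    (hnd : (A ++ B).Nodup)
    (hhead : A.head hA = s) (hlast : B.getLast hB = t)
    (i0 : ι) (LA LB : List ι)
    (hLA : LA.length = (pathEdges A).length) (hLB : LB.length = (pathEdges B).length)
    (hndL : (LA ++ i0 :: LB).Nodup)
    (hcA : ∀ c ∈ LA, ∀ e ∈ pathEdges A, e ∈ F c)
    (hcB : ∀ c ∈ LB, ∀ e ∈ pathEdges B, e ∈ F c)
    (hjump : (A.getLast hA, B.head hB) ∈ F i0) :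
    HasRainbowStPath s t F := by
  have hp : IsStPath s t (A ++ B) := by
    refine ⟨hnd, ?_, ?_⟩
    · rw [List.head?_append_of_ne_nil _ hA, List.head?_eq_head hA, hhead]
    · rw [List.getLast?_append, List.getLast?_eq_getLast hB, hlast]; rfl
  refine rainbow_of_forall₂ _ hp (LA ++ i0 :: LB) hndL ?_
  rw [pathEdges_append A B hA hB]
  refine List.rel_append (forall₂_of_pool hLA hcA) ?_
  rw [List.forall₂_cons]
  exact ⟨hjump, forall₂_of_pool hLB hcB⟩

end StAux

section Chunk2
namespace StAux
open List
variable {V ι : Type*}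

lemma stPath_ne_nil {s t : V} {p : List V} (hp : IsStPath s t p) : p ≠ [] := by
  intro h; rw [h] at hp; simp [IsStPath] at hp

lemma stPath_head {s t : V} {p : List V} (hp : IsStPath s t p) :
    p[0]'(by cases p with | nil => exact absurd rfl (stPath_ne_nil hp) | cons a l => simp) = s := by
  have h := hp.2.1
  rw [List.head?_eq_head (stPath_ne_nil hp), List.head_eq_getElem] at h
  exact Option.some_injective _ h

lemma stPath_last {s t : V} {p : List V} (hp : IsStPath s t p) :
    p[p.length - 1]'(by have := List.length_pos_iff.mpr (stPath_ne_nil hp); omega) = t := by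
  have h := hp.2.2
  rw [List.getLast?_eq_getLast (stPath_ne_nil hp), List.getLast_eq_getElem] at h
  exact Option.some_injective _ h

lemma mem_innerVerts_of_ne {s t : V} {p : List V} (hp : IsStPath s t p)
    {v : V} (hv : v ∈ p) (hvs : v ≠ s) (hvt : v ≠ t) : v ∈ innerVerts p := by
  rw [List.mem_iff_getElem] at hv
  obtain ⟨j, hj, rfl⟩ := hv
  have h0 : j ≠ 0 := fun h => hvs (by subst h; exact stPath_head hp)
  have h1 : j ≠ p.length - 1 := fun h => hvt (by
    rw [← stPath_last hp]; congr 1)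
  exact innerVerts_getElem p j (by omega) (by omega)

lemma ne_of_mem_innerVerts {s t : V} {p : List V} (hp : IsStPath s t p)
    {v : V} (hv : v ∈ innerVerts p) : v ≠ s ∧ v ≠ t ∧ v ∈ p := by
  rw [mem_innerVerts_iff] at hv
  obtain ⟨j, h1, h2, h3, rfl⟩ := hv
  refine ⟨?_, ?_, List.getElem_mem h3⟩
  · rw [← stPath_head hp]
    intro h
    have := (hp.1.getElem_inj_iff).mp h
    omega
  · rw [← stPath_last hp]
    intro h
    have := (hp.1.getElem_inj_iff).mp h
    omega

lemma stPath_reverse {s t : V} {p : List V} (hp : IsStPath s t p) :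
    IsStPath t s p.reverse :=
  ⟨List.nodup_reverse.mpr hp.1, by rw [List.head?_reverse]; exact hp.2.2,
    by rw [List.getLast?_reverse]; exact hp.2.1⟩

lemma innerVerts_reverse (l : List V) :
    innerVerts l.reverse = (innerVerts l).reverse := by
  show l.reverse.tail.dropLast = l.tail.dropLast.reverse
  rw [List.tail_reverse, List.dropLast_reverse, List.tail_dropLast]

lemma mem_pathEdges_reverse (l : List V) (e : V × V) :
    e ∈ pathEdges l.reverse ↔ e.swap ∈ pathEdges l := by
  rw [pathEdges_reverse, List.mem_reverse, List.mem_map]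
  constructor
  · rintro ⟨x, hx, rfl⟩; simpa using hx
  · intro h; exact ⟨e.swap, h, by simp⟩

lemma hasRainbow_iff {s t : V} {F : ι → Set (V × V)} :
    HasRainbowStPath s t F ↔ ∃ p : List V, IsStPath s t p ∧
      ∃ L : List ι, L.Nodup ∧ List.Forall₂ (fun e c => e ∈ F c) (pathEdges p) L := by
  constructor
  · rintro ⟨p, hp, g, hg, hmem⟩
    refine ⟨p, hp, List.ofFn g, List.nodup_ofFn.mpr hg, ?_⟩
    rw [List.forall₂_iff_get]
    refine ⟨by simp, fun i h1 h2 => ?_⟩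
    rw [List.get_ofFn]
    exact hmem _
  · rintro ⟨p, hp, L, hnd, hf⟩
    exact rainbow_of_forall₂ p hp L hnd hf

lemma rainbow_reverse {s t : V} {F : ι → Set (V × V)}
    (h : HasRainbowStPath t s (fun i => Prod.swap ⁻¹' F i)) :
    HasRainbowStPath s t F := by
  rw [hasRainbow_iff] at h ⊢
  obtain ⟨p, hp, L, hnd, hf⟩ := h
  refine ⟨p.reverse, stPath_reverse hp, L.reverse, List.nodup_reverse.mpr hnd, ?_⟩
  rw [pathEdges_reverse, List.forall₂_reverse_iff, List.forall₂_map_left_iff]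
  exact hf

/-- The reversed regimentation. -/
def revReg {s t : V} {F : ι → Set (V × V)} (R : Regimentation s t F) :
    Regimentation t s (fun i => Prod.swap ⁻¹' F i) where
  paths := List.reverse '' R.paths
  isPath := by rintro p ⟨q, hq, rfl⟩; exact stPath_reverse (R.isPath q hq)
  intDisj := by
    rintro p ⟨q, hq, rfl⟩ p' ⟨q', hq', rfl⟩ hne v hv hv'
    rw [innerVerts_reverse, List.mem_reverse] at hv hv'
    exact R.intDisj q hq q' hq' (fun h => hne (by rw [h])) v hv hv'
  cover := by
    intro v
    obtain ⟨p, hp, hv⟩ := R.cover v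
    exact ⟨p.reverse, Set.mem_image_of_mem _ hp, List.mem_reverse.mpr hv⟩
  ess := R.ess
  I := fun i => (R.I i).reverse
  I_mem := fun i hi => Set.mem_image_of_mem _ (R.I_mem i hi)
  I_surj := by
    rintro p ⟨q, hq, rfl⟩
    obtain ⟨i, hi, hIi⟩ := R.I_surj q hq
    exact ⟨i, hi, by show (R.I i).reverse = q.reverse; rw [hIi]⟩
  I_rep := by
    intro i hi e he
    rw [mem_pathEdges_reverse] at he
    exact R.I_rep i hi e.swap he
  I_count := by
    rintro p ⟨q, hq, rfl⟩
    have hset : {i | i ∈ R.ess ∧ (R.I i).reverse = q.reverse} = {i | i ∈ R.ess ∧ R.I i = q} := by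
      ext i; simp [List.reverse_inj]
    rw [hset]
    have := R.I_count q hq
    rw [this]
    simp [length_pathEdges]

end StAux
end Chunk2

section Chunk3
namespace StAux
open List
variable {V ι : Type*}

lemma take_eq_of_agree {p q : List V} {k : ℕ} (hk1 : k ≤ p.length) (hk2 : k ≤ q.length)
    (h : ∀ r (hr : r < k), p[r]'(by omega) = q[r]'(by omega)) : p.take k = q.take k := by
  apply List.ext_getElem
  · simp; omega
  · intro n h1 h2
    rw [List.getElem_take, List.getElem_take]
    exact h n (by simp at h1; omega)

lemma getElem_of_take_eq {p q : List V} {k : ℕ} (h : p.take k = q.take k)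
    {r : ℕ} (hr : r < k) (h1 : r < p.length) (h2 : r < q.length) : p[r] = q[r] := by
  have e1 : (p.take k)[r]'(by simp; omega) = p[r] := List.getElem_take
  have e2 : (q.take k)[r]'(by simp; omega) = q[r] := List.getElem_take
  rw [← e1, ← e2]
  exact List.getElem_of_eq h _

lemma not_mem_take_of_nodup {q : List V} (hnd : q.Nodup) {n k : ℕ}
    (hn : n < q.length) (hk : k ≤ n) : q[n] ∉ q.take k := by
  intro hmem
  rw [List.mem_iff_getElem] at hmem
  obtain ⟨r, hr, hval⟩ := hmem
  rw [List.getElem_take] at hval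
  have := (hnd.getElem_inj_iff).mp hval
  simp at hr
  omega

lemma head_drop {q : List V} {j : ℕ} (h : j < q.length) :
    (q.drop j).head (by simp [List.length_pos_iff]; omega) = q[j] := by
  rw [List.head_eq_getElem, List.getElem_drop]
  congr 1

lemma getLast_take {q : List V} {k : ℕ} (hk : k + 1 ≤ q.length) :
    (q.take (k+1)).getLast (by simp [← List.length_pos_iff]; omega) = q[k]'(by omega) := by
  rw [List.getLast_eq_getElem]
  have hl : (q.take (k+1)).length = k + 1 := by simp; omega
  simp only [hl]
  have : (take (k+1) q)[k+1-1]'(by omega) = q[k+1-1]'(by omega) := List.getElem_take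
  rw [this]
  congr 1

lemma mem_drop_iff {q : List V} {j : ℕ} {v : V} :
    v ∈ q.drop j ↔ ∃ r, j ≤ r ∧ ∃ h : r < q.length, q[r] = v := by
  rw [List.mem_iff_getElem]
  constructor
  · rintro ⟨n, hn, rfl⟩
    rw [List.getElem_drop]
    exact ⟨j + n, by omega, by simp at hn; omega, rfl⟩
  · rintro ⟨r, hjr, hr, rfl⟩
    refine ⟨r - j, by simp; omega, ?_⟩
    rw [List.getElem_drop]
    congr 1; omega

lemma mem_take_iff {q : List V} {k : ℕ} {v : V} :
    v ∈ q.take k ↔ ∃ r, r < k ∧ ∃ h : r < q.length, q[r] = v := by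
  rw [List.mem_iff_getElem]
  constructor
  · rintro ⟨n, hn, rfl⟩
    rw [List.getElem_take]
    simp at hn
    exact ⟨n, by omega, by omega, rfl⟩
  · rintro ⟨r, hrk, hr, rfl⟩
    refine ⟨r, by simp; omega, ?_⟩
    rw [List.getElem_take]

lemma fib_ncard {s t : V} {F : ι → Set (V × V)} (R : Regimentation s t F)
    {q : List V} (hq : q ∈ R.paths) :
    {c | c ∈ R.ess ∧ R.I c = q}.ncard = q.length - 2 := by
  have := R.I_count q hq
  rwa [length_pathEdges, Nat.sub_sub] at this

lemma pool_fib {s t : V} {F : ι → Set (V × V)} (R : Regimentation s t F)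
    {q : List V} (hq : q ∈ R.paths) {k : ℕ} (hk : k ≤ q.length - 2) :
    ∃ L : List ι, L.Nodup ∧ L.length = k ∧ ∀ c ∈ L, c ∈ R.ess ∧ R.I c = q :=
  exists_pool_list _ _ _ (fib_ncard R hq) hk

lemma pool_fib_avoid {s t : V} {F : ι → Set (V × V)} (R : Regimentation s t F)
    {q : List V} (hq : q ∈ R.paths) {i : ι} (hi : i ∈ R.ess ∧ R.I i = q)
    {k : ℕ} (hk : k ≤ q.length - 3) (hq3 : 3 ≤ q.length) :
    ∃ L : List ι, L.Nodup ∧ L.length = k ∧ i ∉ L ∧ ∀ c ∈ L, c ∈ R.ess ∧ R.I c = q := by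
  have hfin : {c | c ∈ R.ess ∧ R.I c = q}.Finite := by
    by_contra hinf
    have := Set.Infinite.ncard (by simpa using hinf)
    rw [fib_ncard R hq] at this
    omega
  have hnc : ({c | c ∈ R.ess ∧ R.I c = q} \ {i}).ncard = q.length - 3 := by
    rw [Set.ncard_diff_singleton_of_mem (s := {c | c ∈ R.ess ∧ R.I c = q}) hi, fib_ncard R hq]
    omega
  obtain ⟨L, h1, h2, h3⟩ := exists_pool_list _ _ k hnc hk
  exact ⟨L, h1, h2, fun hmem => (h3 i hmem).2 rfl, fun c hc => (h3 c hc).1⟩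

end StAux
end Chunk3

section Chunk4
namespace StAux
open List
variable {V ι : Type*} {s t : V} {F : ι → Set (V × V)}

lemma ne_st (hno : ¬ HasRainbowStPath s t F) : s ≠ t := by
  intro h
  apply hno
  rw [hasRainbow_iff]
  refine ⟨[s], ⟨by simp, by simp, by simp [← h]⟩, [], by simp, ?_⟩
  show List.Forall₂ _ (pathEdges [s]) []
  exact List.Forall₂.nil

lemma length_three (hno : ¬ HasRainbowStPath s t F) {i : ι} {p : List V}
    (hp : IsStPath s t p) (hpF : ∀ e ∈ pathEdges p, e ∈ F i) : 3 ≤ p.length := by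
  by_contra h
  have hne := stPath_ne_nil hp
  have h1 : 1 ≤ p.length := List.length_pos_iff.mpr hne
  interval_cases hl : p.length
  · -- length 1
    obtain ⟨a, rfl⟩ := List.length_eq_one_iff.mp hl
    have h1 : a = s := by simpa [IsStPath] using hp.2.1
    have h2 : a = t := by simpa [IsStPath] using hp.2.2
    exact ne_st hno (h1 ▸ h2 ▸ rfl)
  · -- length 2
    obtain ⟨a, b, rfl⟩ := List.length_eq_two.mp hl
    have h1 : a = s := by simpa using hp.2.1
    have h2 : b = t := by simpa [List.getLast?] using hp.2.2
    apply hno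
    rw [hasRainbow_iff]
    refine ⟨[a, b], hp, [i], by simp, ?_⟩
    have hpe : pathEdges [a, b] = [(a, b)] := rfl
    rw [hpe]
    exact List.Forall₂.cons (hpF (a, b) (by rw [hpe]; simp)) List.Forall₂.nil

lemma stPath_getLast {p : List V} (hp : IsStPath s t p) :
    p.getLast (stPath_ne_nil hp) = t := by
  rw [List.getLast_eq_getElem]
  exact stPath_last hp

lemma getLast_drop_st {q : List V} (hq : IsStPath s t q) {j : ℕ} (hne : q.drop j ≠ []) :
    (q.drop j).getLast hne = t := by
  rw [List.getLast_drop]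
  rw [List.getLast_eq_getElem]
  exact stPath_last hq

lemma head_take_st {q : List V} (hq : IsStPath s t q) {k : ℕ} (hne : q.take (k+1) ≠ []) :
    (q.take (k+1)).head hne = s := by
  have hqne : q ≠ [] := stPath_ne_nil hq
  have h0 : 0 < q.length := List.length_pos_iff.mpr hqne
  rw [List.head_eq_getElem]
  have heq : (q.take (k+1))[0]'(List.length_pos_iff.mpr hne) = q[0]'h0 := List.getElem_take
  rw [heq]
  exact stPath_head hq

end StAux
end Chunk4

section Chunk5
namespace StAux
open List
variable {V ι : Type*} {s t : V} {F : ι → Set (V × V)}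

lemma fwd (R : Regimentation s t F) (hno : ¬ HasRainbowStPath s t F) (i : ι) (p : List V)
    (hp : IsStPath s t p) (hpF : ∀ e ∈ pathEdges p, e ∈ F i) :
    i ∈ R.ess ∧ R.I i ∈ R.paths ∧
      (p = R.I i ∨
        (3 ≤ (R.I i).length ∧
         p.take ((R.I i).length - 1) = (R.I i).take ((R.I i).length - 1) ∧
         ∃ h : (R.I i).length - 1 < p.length, p[(R.I i).length - 1] ≠ t)) := by
  have hst : s ≠ t := ne_st hno
  have h3p : 3 ≤ p.length := length_three hno hp hpF
  have hndp := hp.1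
  have hp0 : p[0]'(by omega) = s := stPath_head hp
  have hplast : p[p.length - 1]'(by omega) = t := stPath_last hp
  have h1lt : 1 < p.length := by omega
  have hw1s : p[1]'h1lt ≠ s := by
    rw [← hp0]; intro h; have := hndp.getElem_inj_iff.mp h; omega
  have hw1t : p[1]'h1lt ≠ t := by
    rw [← hplast]; intro h; have := hndp.getElem_inj_iff.mp h; omega
  obtain ⟨q1, hq1, hw1q1⟩ := R.cover (p[1]'h1lt)
  have hq1p := R.isPath q1 hq1
  have hinner : p[1]'h1lt ∈ innerVerts q1 := mem_innerVerts_of_ne hq1p hw1q1 hw1s hw1t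
  rw [mem_innerVerts_iff] at hinner
  obtain ⟨j, hj1, hj2, hj3, hjval⟩ := hinner
  have e0 : ((p[0]'(by omega) : V), p[0+1]'(by omega)) ∈ F i := hpF _ (mem_pathEdges p 0 (by omega))
  have e0' : ((s : V), p[1]'h1lt) ∈ F i := by rw [← hp0]; exact e0
  -- base step
  by_cases hbase : i ∈ R.ess ∧ R.I i = q1 ∧ j = 1
  case neg =>
    exfalso
    apply hno
    -- glue [s] with q1.drop j
    have hBlen : (q1.drop j).length = q1.length - j := by simp
    have hBne : q1.drop j ≠ [] := by
      apply List.ne_nil_of_length_pos; omega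
    have hheadB : (q1.drop j).head hBne = q1[j]'(by omega) := head_drop (by omega)
    have hnodup : (([s] : List V) ++ q1.drop j).Nodup := by
      rw [List.singleton_append, List.nodup_cons]
      constructor
      · intro hmem
        rw [mem_drop_iff] at hmem
        obtain ⟨r, hjr, hr, hval⟩ := hmem
        have hq10 : q1[0]'(by omega) = s := stPath_head hq1p
        rw [← hq10] at hval
        have := hq1p.1.getElem_inj_iff.mp hval
        omega
      · exact (List.drop_sublist _ _).nodup hq1p.1
    -- pool for B
    have hedgesB : (pathEdges (q1.drop j)).length = q1.length - j - 1 := by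
      rw [length_pathEdges]; omega
    obtain ⟨LB, hLBnd, hLBlen, hiLB, hLBfib⟩ :
        ∃ L : List ι, L.Nodup ∧ L.length = q1.length - j - 1 ∧ i ∉ L ∧
          ∀ c ∈ L, c ∈ R.ess ∧ R.I c = q1 := by
      by_cases hifib : i ∈ R.ess ∧ R.I i = q1
      · have hjge2 : 2 ≤ j := by
          rcases Nat.lt_or_ge j 2 with h | h
          · exfalso; apply hbase; exact ⟨hifib.1, hifib.2, by omega⟩
          · exact h
        exact pool_fib_avoid R hq1 hifib (by omega) (by omega)
      · obtain ⟨L, h1, h2, h3⟩ := pool_fib R hq1 (k := q1.length - j - 1) (by omega)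
        exact ⟨L, h1, h2, fun hmem => hifib (h3 i hmem), h3⟩
    refine glue_rainbow [s] (q1.drop j) (by simp) hBne hnodup rfl
      (getLast_drop_st hq1p hBne) i [] LB (by simp [pathEdges]) (by rw [hLBlen, hedgesB])
      ?_ (by simp) ?_ ?_
    · simp only [List.nil_append, List.nodup_cons]
      exact ⟨hiLB, hLBnd⟩
    · intro c hc e he
      have hfib := hLBfib c hc
      exact R.I_rep c hfib.1 e (by
        rw [hfib.2]; exact (pathEdges_drop_sublist q1 j).subset he)
    · show ((([s] : List V).getLast (by simp), (q1.drop j).head hBne)) ∈ F i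
      have : (([s] : List V).getLast (by simp)) = s := rfl
      rw [this, hheadB, hjval]
      exact e0'
  case pos =>
  obtain ⟨hess, hIi, hjeq⟩ := hbase
  subst hjeq
  have hq13 : 3 ≤ q1.length := by omega
  have htake2 : p.take 2 = q1.take 2 := by
    apply take_eq_of_agree (by omega) (by omega)
    intro r hr
    match r, hr with
    | 0, _ => rw [hp0, stPath_head hq1p]
    | 1, _ => rw [hjval]
  refine ⟨hess, by rw [hIi]; exact hq1, ?_⟩
  rw [hIi]
  -- main loop
  have main : ∀ d k, p.length - k ≤ d → 1 ≤ k → k + 1 ≤ p.length → k + 1 ≤ q1.length →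
      p.take (k+1) = q1.take (k+1) →
      (p = q1 ∨ (3 ≤ q1.length ∧ p.take (q1.length - 1) = q1.take (q1.length - 1) ∧
        ∃ h : q1.length - 1 < p.length, p[q1.length - 1] ≠ t)) := by
    intro d
    induction d with
    | zero => intro k h1 h2 h3 h4 h5; omega
    | succ d ih =>
      intro k hd hk1 hkp hkq htake
      by_cases hkp' : k + 1 = p.length
      · -- reached end of p : p = q1
        left
        have hpk : p[k]'(by omega) = t := by rw [← hplast]; congr 1; omega
        have hqk : q1[k]'(by omega) = t := by
          rw [← (getElem_of_take_eq htake (by omega) (by omega) (by omega) : p[k]'(by omega) = q1[k]'(by omega))]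
          exact hpk
        have hklen : k = q1.length - 1 := by
          have h := stPath_last hq1p
          rw [← h] at hqk
          exact hq1p.1.getElem_inj_iff.mp hqk
        have hlen : p.length = q1.length := by omega
        have h1 : p.take (k+1) = p := by rw [hkp', List.take_length]
        have h2 : q1.take (k+1) = q1 := by
          rw [show k + 1 = q1.length by omega, List.take_length]
        rw [← h1, htake, h2]
      · have hkp2 : k + 2 ≤ p.length := by omega
        by_cases hkq' : k + 1 = q1.length
        · exfalso
          have hqk : q1[k]'(by omega) = t := by
            have h := stPath_last hq1p
            rw [← h]; congr 1; omega
          have hpk : p[k]'(by omega) = t := by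
            rw [getElem_of_take_eq htake (by omega) (by omega) (by omega)]
            exact hqk
          rw [← hplast] at hpk
          have := hndp.getElem_inj_iff.mp hpk
          omega
        · have hkq2 : k + 2 ≤ q1.length := by omega
          by_cases hwx : p[k+1]'(by omega) = q1[k+1]'(by omega)
          · -- prefixes extend
            apply ih (k+1) (by omega) (by omega) (by omega) (by omega)
            apply take_eq_of_agree (by omega) (by omega)
            intro r hr
            rcases Nat.lt_or_ge r (k+1) with h | h
            · exact getElem_of_take_eq htake h (by omega) (by omega)
            · have hreq : r = k+1 := by omega
              subst hreq
              exact hwx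
          · -- mismatch
            have hedgek : ((p[k]'(by omega) : V), p[k+1]'(by omega)) ∈ F i :=
              hpF _ (mem_pathEdges p k (by omega))
            have hpqk : p[k]'(by omega) = q1[k]'(by omega) :=
              getElem_of_take_eq htake (by omega) (by omega) (by omega)
            by_cases hwt : p[k+1]'(by omega) = t
            · -- Case A
              exfalso
              apply hno
              have hxt : q1[k+1]'(by omega) ≠ t := fun h => hwx (by rw [hwt, h])
              have hk3 : k + 3 ≤ q1.length := by
                by_contra h
                apply hxt
                have h' := stPath_last hq1p
                rw [← h']; congr 1; omega
              obtain ⟨LA, hLAnd, hLAlen, hiLA, hLAfib⟩ :=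
                pool_fib_avoid R hq1 ⟨hess, hIi⟩ (k := k) (by omega) hq13
              have hAne : q1.take (k+1) ≠ [] := by
                apply List.ne_nil_of_length_pos; simp; omega
              have hlastA : (q1.take (k+1)).getLast hAne = q1[k]'(by omega) :=
                getLast_take (by omega)
              refine glue_rainbow (q1.take (k+1)) [t] hAne (by simp) ?_ (head_take_st hq1p hAne)
                rfl i LA [] ?_ (by simp [pathEdges]) ?_ ?_ (by simp) ?_
              · rw [List.nodup_append']
                refine ⟨(List.take_sublist _ _).nodup hq1p.1, by simp, ?_⟩
                intro v hv hvt
                rw [List.mem_singleton] at hvt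
                subst hvt
                have h' := stPath_last hq1p
                rw [← h'] at hv
                exact not_mem_take_of_nodup hq1p.1 (by omega) (by omega) hv
              · rw [hLAlen, length_pathEdges, List.length_take]
                omega
              · rw [List.nodup_middle]
                simp only [List.append_nil, List.nodup_cons]
                exact ⟨hiLA, hLAnd⟩
              · intro c hc e he
                have hfib := hLAfib c hc
                exact R.I_rep c hfib.1 e (by
                  rw [hfib.2]; exact (pathEdges_take_sublist q1 (k+1)).subset he)
              · show ((q1.take (k+1)).getLast hAne, ([t] : List V).head (by simp)) ∈ F i
                have hh : (([t] : List V).head (by simp)) = t := rfl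
                rw [hh, hlastA, ← hpqk, ← hwt]
                exact hedgek
            · -- w not t : it lies inside some path qw
              have hws : p[k+1]'(by omega) ≠ s := by
                rw [← hp0]; intro h; have := hndp.getElem_inj_iff.mp h; omega
              obtain ⟨qw, hqw, hwmem⟩ := R.cover (p[k+1]'(by omega))
              have hqwp := R.isPath qw hqw
              have hwin : p[k+1]'(by omega) ∈ innerVerts qw :=
                mem_innerVerts_of_ne hqwp hwmem hws hwt
              rw [mem_innerVerts_iff] at hwin
              obtain ⟨jw, hjw1, hjw2, hjw3, hjwval⟩ := hwin
              by_cases hqwq : qw = q1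
              · subst hqwq
                rcases lt_trichotomy jw (k+1) with hlt | heq | hgt
                · exfalso
                  have h1 : p[jw]'(by omega) = qw[jw]'(by omega) :=
                    getElem_of_take_eq htake hlt (by omega) (by omega)
                  rw [hjwval] at h1
                  have := hndp.getElem_inj_iff.mp h1
                  omega
                · exfalso
                  subst heq
                  exact hwx hjwval.symm
                · -- Case B
                  exfalso
                  apply hno
                  have hBne : qw.drop jw ≠ [] := by
                    apply List.ne_nil_of_length_pos; simp; omega
                  have hnodup : (qw.take (k+1) ++ qw.drop jw).Nodup := by
                    have heq1 : (qw.take jw).take (k+1) = qw.take (k+1) := by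
                      rw [List.take_take]
                      congr 1
                      omega
                    have hsub : qw.take (k+1) ++ qw.drop jw <+ qw := by
                      calc qw.take (k+1) ++ qw.drop jw
                          <+ qw.take jw ++ qw.drop jw :=
                            List.Sublist.append (heq1 ▸ List.take_sublist (k+1) (qw.take jw))
                              (List.Sublist.refl _)
                        _ = qw := List.take_append_drop _ _
                    exact hsub.nodup hq1p.1
                  obtain ⟨L, hLnd, hLlen, hiL, hLfib⟩ :=
                    pool_fib_avoid R hq1 ⟨hess, hIi⟩
                      (k := k + (qw.length - jw - 1)) (by omega) hq13
                  have hAne : qw.take (k+1) ≠ [] := by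
                    apply List.ne_nil_of_length_pos; simp; omega
                  refine glue_rainbow (qw.take (k+1)) (qw.drop jw) hAne hBne hnodup
                    (head_take_st hq1p hAne) (getLast_drop_st hq1p hBne) i
                    (L.take k) (L.drop k) ?_ ?_ ?_ ?_ ?_ ?_
                  · rw [List.length_take, length_pathEdges, List.length_take]
                    omega
                  · rw [List.length_drop, length_pathEdges, List.length_drop]
                    omega
                  · rw [List.nodup_middle, List.nodup_cons, List.take_append_drop]
                    exact ⟨hiL, hLnd⟩
                  · intro c hc e he
                    have hfib := hLfib c (List.take_subset _ _ hc)
                    exact R.I_rep c hfib.1 e (by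
                      rw [hfib.2]; exact (pathEdges_take_sublist qw (k+1)).subset he)
                  · intro c hc e he
                    have hfib := hLfib c (List.drop_subset _ _ hc)
                    exact R.I_rep c hfib.1 e (by
                      rw [hfib.2]; exact (pathEdges_drop_sublist qw jw).subset he)
                  · show ((qw.take (k+1)).getLast hAne, (qw.drop jw).head hBne) ∈ F i
                    rw [getLast_take (by omega), head_drop (by omega), hjwval, ← hpqk]
                    exact hedgek
              · -- qw ≠ q1
                by_cases hkQ : k + 3 ≤ q1.length
                · -- Case C
                  exfalso
                  apply hno
                  have hBne : qw.drop jw ≠ [] := by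
                    apply List.ne_nil_of_length_pos; simp; omega
                  have hAne : q1.take (k+1) ≠ [] := by
                    apply List.ne_nil_of_length_pos; simp; omega
                  have hnodup : (q1.take (k+1) ++ qw.drop jw).Nodup := by
                    rw [List.nodup_append']
                    refine ⟨(List.take_sublist _ _).nodup hq1p.1,
                      (List.drop_sublist _ _).nodup hqwp.1, ?_⟩
                    intro v hvA hvB
                    rw [mem_take_iff] at hvA
                    rw [mem_drop_iff] at hvB
                    obtain ⟨r, hrk, hr, rfl⟩ := hvA
                    obtain ⟨r', hjr', hr', hval'⟩ := hvB
                    have hv1 : q1[r] = s ∨ q1[r] ∈ innerVerts q1 := by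
                      rcases Nat.eq_zero_or_pos r with rfl | hrpos
                      · left; exact stPath_head hq1p
                      · right; exact innerVerts_getElem q1 r (by omega) (by omega)
                    have hv2 : q1[r] = t ∨ q1[r] ∈ innerVerts qw := by
                      rcases eq_or_ne r' (qw.length - 1) with rfl | hne'
                      · left; rw [← hval']; exact stPath_last hqwp
                      · right; rw [← hval']
                        exact innerVerts_getElem qw r' (by omega) (by omega)
                    rcases hv1 with hv1 | hv1 <;> rcases hv2 with hv2 | hv2
                    · exact hst (hv1 ▸ hv2 ▸ rfl)
                    · exact (ne_of_mem_innerVerts hqwp hv2).1 hv1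
                    · exact (ne_of_mem_innerVerts hq1p hv1).2.1 hv2
                    · exact R.intDisj q1 hq1 qw hqw (fun h => hqwq h.symm) _ hv1 hv2
                  obtain ⟨LA, hLAnd, hLAlen, hiLA, hLAfib⟩ :=
                    pool_fib_avoid R hq1 ⟨hess, hIi⟩ (k := k) (by omega) hq13
                  obtain ⟨LB, hLBnd, hLBlen, hLBfib⟩ :=
                    pool_fib R hqw (k := qw.length - jw - 1) (by omega)
                  refine glue_rainbow (q1.take (k+1)) (qw.drop jw) hAne hBne hnodup
                    (head_take_st hq1p hAne) (getLast_drop_st hqwp hBne) i LA LB ?_ ?_ ?_ ?_ ?_ ?_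
                  · rw [hLAlen, length_pathEdges, List.length_take]; omega
                  · rw [hLBlen, length_pathEdges, List.length_drop]
                  · rw [List.nodup_middle, List.nodup_cons]
                    constructor
                    · intro hmem
                      rcases List.mem_append.mp hmem with h | h
                      · exact hiLA h
                      · exact hqwq (((hLBfib i h).2).symm.trans hIi)
                    · rw [List.nodup_append']
                      refine ⟨hLAnd, hLBnd, ?_⟩
                      intro c hcA hcB
                      have h1 := (hLAfib c hcA).2
                      have h2 := (hLBfib c hcB).2
                      exact hqwq (h2.symm.trans h1)
                  · intro c hc e he
                    have hfib := hLAfib c hc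
                    exact R.I_rep c hfib.1 e (by
                      rw [hfib.2]; exact (pathEdges_take_sublist q1 (k+1)).subset he)
                  · intro c hc e he
                    have hfib := hLBfib c hc
                    exact R.I_rep c hfib.1 e (by
                      rw [hfib.2]; exact (pathEdges_drop_sublist qw jw).subset he)
                  · show ((q1.take (k+1)).getLast hAne, (qw.drop jw).head hBne) ∈ F i
                    rw [getLast_take (by omega), head_drop (by omega), hjwval, ← hpqk]
                    exact hedgek
                · -- stuck case
                  right
                  have hkk : k = q1.length - 2 := by omega
                  refine ⟨hq13, ?_, by omega, ?_⟩
                  · have h' : q1.length - 1 = k + 1 := by omega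
                    rw [h']
                    exact htake
                  · intro h
                    apply hwt
                    rw [← h]
                    congr 1
                    omega
  rcases main p.length 1 (by omega) le_rfl (by omega) (by omega) htake2 with hdone | hstuck
  · left; exact hdone
  · right; exact hstuck

end StAux
end Chunk5

section Final
namespace StAux
open List
variable {V ι : Type*} {s t : V} {F : ι → Set (V × V)}

lemma essential_unique (R : Regimentation s t F) (hno : ¬ HasRainbowStPath s t F)
    (i : ι) (p : List V) (hp : IsStPath s t p) (hpF : ∀ e ∈ pathEdges p, e ∈ F i) :
    i ∈ R.ess ∧ p = R.I i := by
  obtain ⟨hess, hIq, hcase⟩ := fwd R hno i p hp hpF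
  rcases hcase with h | hF
  · exact ⟨hess, h⟩
  refine ⟨hess, ?_⟩
  -- forward run got stuck; run the argument on the reversed network
  have hno' : ¬ HasRainbowStPath t s (fun c => Prod.swap ⁻¹' F c) :=
    fun h => hno (rainbow_reverse h)
  have hp' : IsStPath t s p.reverse := stPath_reverse hp
  have hpF' : ∀ e ∈ pathEdges p.reverse, e ∈ (fun c => Prod.swap ⁻¹' F c) i := by
    intro e he
    rw [mem_pathEdges_reverse] at he
    exact hpF _ he
  obtain ⟨hess', hIq', hcase'⟩ := fwd (revReg R) hno' i p.reverse hp' hpF'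
  have hrevI : (revReg R).I i = (R.I i).reverse := rfl
  rw [hrevI] at hcase'
  obtain ⟨hq3, htkF, hmlt, hmne⟩ := hF
  have hq1p := R.isPath _ hIq
  have hqlast := stPath_last hq1p
  rcases hcase' with h' | hB
  · -- p.reverse = (R.I i).reverse
    exact List.reverse_injective h'
  · exfalso
    obtain ⟨_, htkB, hmlt', hmne'⟩ := hB
    rw [List.length_reverse] at htkB hmlt'
    have hplen : (R.I i).length - 1 < p.length := hmlt
    have hprevlen : p.reverse.length = p.length := List.length_reverse
    -- indices
    have hidx : p.reverse[(R.I i).length - 2]'(by rw [hprevlen]; omega) =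
        (R.I i).reverse[(R.I i).length - 2]'(by rw [List.length_reverse]; omega) := by
      apply getElem_of_take_eq htkB
      omega
    rw [List.getElem_reverse, List.getElem_reverse] at hidx
    -- p[p.length - 1 - (len - 2)] = (R.I i)[1]
    have hidx1 : p[1]'(by omega) = (R.I i)[1]'(by omega) :=
      getElem_of_take_eq htkF (by omega) (by omega) (by omega)
    have hIidx : (R.I i).length - 1 - ((R.I i).length - 2) = 1 := by omega
    have hcongr : ∀ (l : List V) (a b : ℕ) (h : a = b) (ha : a < l.length),
        l[a] = l[b]'(h ▸ ha) := by
      rintro l a b rfl ha; rfl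
    have heq2 : p[p.length - 1 - ((R.I i).length - 2)]'(by omega) = p[1]'(by omega) := by
      rw [hidx, hcongr (R.I i) _ _ hIidx (by omega), ← hidx1]
    have hind := hp.1.getElem_inj_iff.mp heq2
    have hlen : p.length = (R.I i).length := by omega
    apply hmne
    rw [hcongr p ((R.I i).length - 1) (p.length - 1) (by omega) (by omega)]
    exact stPath_last hp

end StAux
end Final


/-- Let `F` be regimented by `R` and suppose there is no `F`-rainbow `s`–`t`
path.  Then a member of `F` is essential iff it contains the edge set of some
`s`–`t` path, and for essential `F i` the path `I i` is the unique `s`–`t`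
path whose edges are contained in `F i`. -/
theorem stmt_15 {V ι : Type*} (s t : V) (F : ι → Set (V × V))
    (R : Regimentation s t F) (hno : ¬ HasRainbowStPath s t F) :
    ∀ i : ι,
      (i ∈ R.ess ↔ ∃ p : List V, IsStPath s t p ∧ ∀ e ∈ pathEdges p, e ∈ F i) ∧
      (i ∈ R.ess → ∀ p : List V,
        IsStPath s t p → (∀ e ∈ pathEdges p, e ∈ F i) → p = R.I i) := by
  intro i
  constructor
  · constructor
    · intro hi
      exact ⟨R.I i, R.isPath _ (R.I_mem i hi), R.I_rep i hi⟩
    · rintro ⟨p, hp, hpF⟩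
      exact (StAux.essential_unique R hno i p hp hpF).1
  · intro _ p hp hpF
    exact (StAux.essential_unique R hno i p hp hpF).2
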